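/- The p-Wasserstein decomposition is exact: for any p ∈ ℕ and distributions F, G, WD_p(F,G) = ∫_0^1 |F^{-1}(τ) − G^{-1}(τ)|^p dτ equals Shift_+^{WD_p} + Shift_-^{WD_p} + Disp_+^{WD_p} + Disp_-^{WD_p}, where, writing z^{[p]} = sgn(z)|z|^p, Disp_+^{WD_p}(F,G) = (1/2)∫_0^1 [ (F^{-1}((1+α)/2) − G^{-1}((1+α)/2))^{[p]} − (F^{-1}((1−α)/2) − G^{-1}((1−α)/2))^{[p]} ]_+ dα, Shift_+^{WD_p}(F,G) = ∫_0^1 [ min{ (F^{-1}((1+α)/2) − G^{-1}((1+α)/2))^{[p]}, (F^{-1}((1−α)/2) − G^{-1}((1−α)/2))^{[p]} } ]_+ dα, and the minus components arise by exchanging F and G. -/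

import Mathlib

open MeasureTheory intervalIntegral

/-- Generalized quantile function (left-inverse of a CDF). -/
noncomputable def quantile (F : ℝ → ℝ) (τ : ℝ) : ℝ := sInf {x | τ ≤ F x}

/-- Signed `p`-th power `z^{[p]} = sgn(z)·|z|^p`. -/
noncomputable def sgnPow (p : ℕ) (z : ℝ) : ℝ := Real.sign z * |z| ^ p

/-- `Disp₊^{WD_p}` component. -/
noncomputable def wdDispPlus (p : ℕ) (qF qG : ℝ → ℝ) : ℝ :=
  (1 / 2) * ∫ α in (0:ℝ)..1,
    max (sgnPow p (qF ((1 + α) / 2) - qG ((1 + α) / 2)) -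
         sgnPow p (qF ((1 - α) / 2) - qG ((1 - α) / 2))) 0

/-- `Shift₊^{WD_p}` component. -/
noncomputable def wdShiftPlus (p : ℕ) (qF qG : ℝ → ℝ) : ℝ :=
  ∫ α in (0:ℝ)..1,
    max (min (sgnPow p (qF ((1 + α) / 2) - qG ((1 + α) / 2)))
             (sgnPow p (qF ((1 - α) / 2) - qG ((1 - α) / 2)))) 0

lemma sgnPow_neg' (p : ℕ) (z : ℝ) : sgnPow p (-z) = - sgnPow p z := by
  simp [sgnPow, Real.sign_neg, abs_neg]

lemma abs_sgnPow (p : ℕ) (hp : 1 ≤ p) (z : ℝ) : |sgnPow p z| = |z| ^ p := by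
  rcases lt_trichotomy z 0 with h | h | h
  · simp [sgnPow, Real.sign_of_neg h, abs_mul]
  · simp [sgnPow, h, zero_pow (by omega : p ≠ 0)]
  · simp [sgnPow, Real.sign_of_pos h, abs_mul]

lemma key_abs (U V : ℝ) : |V| + |U| =
    2 * max (min U V) 0 + 2 * max (min (-U) (-V)) 0 + max (U - V) 0 + max (V - U) 0 := by
  rcases abs_cases U with ⟨hU, hU'⟩ | ⟨hU, hU'⟩ <;>
    rcases abs_cases V with ⟨hV, hV'⟩ | ⟨hV, hV'⟩ <;>
    rcases le_total U V with h | h <;>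
    simp [max_def, min_def, hU, hV] <;> split_ifs <;> linarith

/-- The `WD_p` decomposition is exact. -/
theorem wd_decomposition_exact (p : ℕ) (hp : 1 ≤ p) (F G : ℝ → ℝ)
    (hF : Monotone F) (hG : Monotone G)
    (hF0 : Filter.Tendsto F Filter.atBot (nhds 0))
    (hF1 : Filter.Tendsto F Filter.atTop (nhds 1))
    (hG0 : Filter.Tendsto G Filter.atBot (nhds 0))
    (hG1 : Filter.Tendsto G Filter.atTop (nhds 1))
    (hWD : IntervalIntegrable
      (fun τ => |quantile F τ - quantile G τ| ^ p) volume 0 1)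
    (hSp : IntervalIntegrable (fun α =>
      max (min (sgnPow p (quantile F ((1 + α) / 2) - quantile G ((1 + α) / 2)))
               (sgnPow p (quantile F ((1 - α) / 2) - quantile G ((1 - α) / 2)))) 0) volume 0 1)
    (hSm : IntervalIntegrable (fun α =>
      max (min (sgnPow p (quantile G ((1 + α) / 2) - quantile F ((1 + α) / 2)))
               (sgnPow p (quantile G ((1 - α) / 2) - quantile F ((1 - α) / 2)))) 0) volume 0 1)
    (hDp : IntervalIntegrable (fun α =>
      max (sgnPow p (quantile F ((1 + α) / 2) - quantile G ((1 + α) / 2)) -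
           sgnPow p (quantile F ((1 - α) / 2) - quantile G ((1 - α) / 2))) 0) volume 0 1)
    (hDm : IntervalIntegrable (fun α =>
      max (sgnPow p (quantile G ((1 + α) / 2) - quantile F ((1 + α) / 2)) -
           sgnPow p (quantile G ((1 - α) / 2) - quantile F ((1 - α) / 2))) 0) volume 0 1) :
    (∫ τ in (0:ℝ)..1, |quantile F τ - quantile G τ| ^ p) =
      wdShiftPlus p (quantile F) (quantile G) +
      wdShiftPlus p (quantile G) (quantile F) +
      wdDispPlus p (quantile F) (quantile G) +
      wdDispPlus p (quantile G) (quantile F) := by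
  set f : ℝ → ℝ := fun τ => |quantile F τ - quantile G τ| ^ p with hf
  -- integrability of the two rescaled pieces
  have hsub1 : Set.uIcc (0:ℝ) (1/2) ⊆ Set.uIcc (0:ℝ) 1 := by
    rw [Set.uIcc_of_le (by norm_num : (0:ℝ) ≤ 1/2), Set.uIcc_of_le (by norm_num : (0:ℝ) ≤ 1)]
    exact Set.Icc_subset_Icc_right (by norm_num)
  have hsub2 : Set.uIcc ((1:ℝ)/2) 1 ⊆ Set.uIcc (0:ℝ) 1 := by
    rw [Set.uIcc_of_le (by norm_num : (1:ℝ)/2 ≤ 1), Set.uIcc_of_le (by norm_num : (0:ℝ) ≤ 1)]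
    exact Set.Icc_subset_Icc_left (by norm_num)
  have hsub3 : Set.uIcc (0:ℝ) 1 ⊆ Set.uIcc (-1:ℝ) 1 := by
    rw [Set.uIcc_of_le (by norm_num : (0:ℝ) ≤ 1), Set.uIcc_of_le (by norm_num : (-1:ℝ) ≤ 1)]
    exact Set.Icc_subset_Icc_left (by norm_num)
  have w1 : IntervalIntegrable f volume 0 (1/2) := hWD.mono_set hsub1
  have w2 : IntervalIntegrable f volume (1/2) 1 := hWD.mono_set hsub2
  have h1 : IntervalIntegrable (fun x => f (x + 1/2)) volume (0 - 1/2) (1 - 1/2) :=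
    hWD.comp_add_right (1/2)
  have h2 : IntervalIntegrable (fun x => f (x * (1/2) + 1/2)) volume (-1) 1 := by
    have h1' := h1.comp_mul_right (c := 1/2) enorm_ne_top enorm_ne_top
    rw [show ((0:ℝ) - 1/2)/(1/2) = -1 by norm_num,
        show ((1:ℝ) - 1/2)/(1/2) = 1 by norm_num] at h1'
    exact h1'
  have hA : IntervalIntegrable (fun α => f ((1 + α)/2)) volume 0 1 := by
    have h4 := h2.mono_set hsub3
    simp only [show ∀ α : ℝ, (1 + α)/2 = α * (1/2) + 1/2 from fun α => by ring]
    exact h4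
  have hB : IntervalIntegrable (fun α => f ((1 - α)/2)) volume 0 1 := by
    have h3 := ((IntervalIntegrable.iff_comp_neg enorm_ne_top).mp h2).symm
    rw [show (-(1:ℝ)) = -1 by norm_num, show (-(-1:ℝ)) = 1 by norm_num] at h3
    have h4 := h3.mono_set hsub3
    simp only [show ∀ α : ℝ, (1 - α)/2 = -α * (1/2) + 1/2 from fun α => by ring]
    exact h4
  -- substitution identities
  have E1 : ∫ α in (0:ℝ)..1, f ((1 + α)/2) = 2 * ∫ x in (1/2:ℝ)..1, f x := by
    simp only [show ∀ α : ℝ, (1 + α)/2 = 2⁻¹ * α + 2⁻¹ from fun α => by ring]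
    rw [intervalIntegral.integral_comp_mul_add f (by norm_num : (2:ℝ)⁻¹ ≠ 0) 2⁻¹]
    norm_num
  have E2 : ∫ α in (0:ℝ)..1, f ((1 - α)/2) = 2 * ∫ x in (0:ℝ)..(1/2), f x := by
    simp only [show ∀ α : ℝ, (1 - α)/2 = 2⁻¹ - 2⁻¹ * α from fun α => by ring]
    rw [intervalIntegral.integral_comp_sub_mul f (by norm_num : (2:ℝ)⁻¹ ≠ 0) 2⁻¹]
    norm_num
  -- main pointwise identity under the integral
  have main : ∫ α in (0:ℝ)..1, (f ((1 - α)/2) + f ((1 + α)/2)) =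
      ∫ α in (0:ℝ)..1,
        (2 * max (min (sgnPow p (quantile F ((1 + α) / 2) - quantile G ((1 + α) / 2)))
               (sgnPow p (quantile F ((1 - α) / 2) - quantile G ((1 - α) / 2)))) 0 +
         2 * max (min (sgnPow p (quantile G ((1 + α) / 2) - quantile F ((1 + α) / 2)))
               (sgnPow p (quantile G ((1 - α) / 2) - quantile F ((1 - α) / 2)))) 0 +
         max (sgnPow p (quantile F ((1 + α) / 2) - quantile G ((1 + α) / 2)) -
           sgnPow p (quantile F ((1 - α) / 2) - quantile G ((1 - α) / 2))) 0 +
         max (sgnPow p (quantile G ((1 + α) / 2) - quantile F ((1 + α) / 2)) -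
           sgnPow p (quantile G ((1 - α) / 2) - quantile F ((1 - α) / 2))) 0) := by
    apply intervalIntegral.integral_congr
    intro α _
    have e1 : quantile G ((1 + α)/2) - quantile F ((1 + α)/2)
        = -(quantile F ((1 + α)/2) - quantile G ((1 + α)/2)) := by ring
    have e2 : quantile G ((1 - α)/2) - quantile F ((1 - α)/2)
        = -(quantile F ((1 - α)/2) - quantile G ((1 - α)/2)) := by ring
    simp only [hf, e1, e2, sgnPow_neg', neg_sub_neg]
    rw [show |quantile F ((1 - α)/2) - quantile G ((1 - α)/2)| ^ p
          = |sgnPow p (quantile F ((1 - α)/2) - quantile G ((1 - α)/2))|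
        from (abs_sgnPow p hp _).symm,
       show |quantile F ((1 + α)/2) - quantile G ((1 + α)/2)| ^ p
          = |sgnPow p (quantile F ((1 + α)/2) - quantile G ((1 + α)/2))|
        from (abs_sgnPow p hp _).symm]
    exact key_abs _ _
  -- split the RHS of main into four integrals
  rw [integral_add (((hSp.const_mul 2).add (hSm.const_mul 2)).add hDp) hDm,
      integral_add ((hSp.const_mul 2).add (hSm.const_mul 2)) hDp,
      integral_add (hSp.const_mul 2) (hSm.const_mul 2),
      intervalIntegral.integral_const_mul, intervalIntegral.integral_const_mul] at main
  rw [integral_add hB hA] at main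
  -- assemble
  have split : (∫ τ in (0:ℝ)..1, f τ) =
      (∫ τ in (0:ℝ)..(1/2), f τ) + ∫ τ in (1/2:ℝ)..1, f τ :=
    (intervalIntegral.integral_add_adjacent_intervals w1 w2).symm
  show (∫ τ in (0:ℝ)..1, f τ) = _
  unfold wdShiftPlus wdDispPlus
  rw [split]
  have e3 : (∫ τ in (0:ℝ)..(1/2), f τ) = (1/2) * ∫ α in (0:ℝ)..1, f ((1 - α)/2) := by
    rw [E2]; ring
  have e4 : (∫ τ in (1/2:ℝ)..1, f τ) = (1/2) * ∫ α in (0:ℝ)..1, f ((1 + α)/2) := by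
    rw [E1]; ring
  rw [e3, e4]
  linarith [main]
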